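/- Define the q-Stirling subset number {n brace k}_q to be the number of unordered direct sum decompositions of F_q^n into k nonzero subspaces. Then {n brace k}_q = (1/k!) · Σ γ_n / (γ_{n_1} ⋯ γ_{n_k}), the sum over all ordered k-tuples (n_1, ..., n_k) of positive integers with n_1 + ⋯ + n_k = n, where γ_m = |GL_m(F_q)|. -/

import Mathlib

/-- The order of `GL_m(F_q)`. -/
def gma (q m : ℕ) : ℕ := ∏ i ∈ Finset.range m, (q ^ m - q ^ i)

/-- The `q`-Stirling subset number `{n brace k}_q`: the number of unordered direct sum
decompositions of `F_q^n` into `k` nonzero subspaces. -/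
noncomputable def qStirling (n k : ℕ) (F : Type) [Field F] [Fintype F] : ℕ :=
  Nat.card {D : Finset (Submodule F (Fin n → F)) //
    D.card = k ∧ (∀ V ∈ D, V ≠ ⊥) ∧
    sSupIndep (D : Set (Submodule F (Fin n → F))) ∧
    sSup (D : Set (Submodule F (Fin n → F))) = ⊤}

open Module Submodule Finset

section aux

variable {F : Type} [Field F] [Fintype F]

lemma gma_pos (m : ℕ) : 0 < gma (Fintype.card F) m := by
  have h2 : 1 < Fintype.card F := Fintype.one_lt_card
  refine Finset.prod_pos fun i hi => ?_
  have := Nat.pow_lt_pow_right h2 (Finset.mem_range.1 hi)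
  omega

lemma card_basis_fin {M : Type} [AddCommGroup M] [Module F M] [Finite M]
    (m : ℕ) (hm : Module.finrank F M = m) :
    Nat.card (Basis (Fin m) F M) = gma (Fintype.card F) m := by
  have hfin : Module.Finite F M := Module.Finite.of_finite
  have hsur : ∀ s : {s : Fin m → M // LinearIndependent F s},
      ⊤ ≤ Submodule.span F (Set.range s.1) := by
    intro s
    exact ge_of_eq (Submodule.eq_top_of_finrank_eq (by rw [finrank_span_eq_card s.2, Fintype.card_fin, hm]))
  have e : Basis (Fin m) F M ≃ {s : Fin m → M // LinearIndependent F s} :=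
    { toFun := fun b => ⟨b, b.linearIndependent⟩
      invFun := fun s => Basis.mk s.2 (hsur s)
      left_inv := fun b => (Basis.eq_of_apply_eq fun i => Basis.mk_apply _ _ i)
      right_inv := fun s => Subtype.ext (funext fun i => Basis.mk_apply _ _ i) }
  rw [Nat.card_congr e, card_linearIndependent (by rw [hm]), hm, gma,
    ← Fin.prod_univ_eq_prod_range]

lemma card_basis' {M : Type} [AddCommGroup M] [Module F M] [Finite M]
    (ι : Type) [Fintype ι] (hm : Fintype.card ι = Module.finrank F M) :
    Nat.card (Basis ι F M) = gma (Fintype.card F) (Fintype.card ι) := by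
  have e0 : ι ≃ Fin (Fintype.card ι) := Fintype.equivFin ι
  have e : Basis ι F M ≃ Basis (Fin (Fintype.card ι)) F M :=
    { toFun := fun b => b.reindex e0
      invFun := fun b => b.reindex e0.symm
      left_inv := fun b => Basis.eq_of_apply_eq fun i => by simp
      right_inv := fun b => Basis.eq_of_apply_eq fun i => by simp }
  rw [Nat.card_congr e, card_basis_fin _ hm.symm]

end aux
section aux2

variable {F : Type} [Field F] [Fintype F]

omit [Fintype F] in
lemma span_block {M : Type} [AddCommGroup M] [Module F M] (p : Submodule F M)
    {ι : Type*} (b : Basis ι F p) :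
    Submodule.span F (Set.range fun j => (b j : M)) = p := by
  have : (Set.range fun j => (b j : M)) = p.subtype '' (Set.range b) := by
    rw [← Set.range_comp]; rfl
  rw [this, Submodule.span_image, b.span_eq, Submodule.map_top, Submodule.range_subtype]

lemma card_Dc {M : Type} [AddCommGroup M] [Module F M] [Finite M]
    {n k : ℕ} (hn : Module.finrank F M = n) (c : Fin k → ℕ) (hc : ∑ i, c i = n) :
    Nat.card {V : Fin k → Submodule F M // iSupIndep V ∧ (⨆ i, V i) = ⊤ ∧
        ∀ i, Module.finrank F (V i) = c i} * ∏ i, gma (Fintype.card F) (c i) =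
      gma (Fintype.card F) n := by
  classical
  have hfin : Module.Finite F M := Module.Finite.of_finite
  set T := {V : Fin k → Submodule F M // iSupIndep V ∧ (⨆ i, V i) = ⊤ ∧
        ∀ i, Module.finrank F (V i) = c i} with hT
  have internal : ∀ V : T, DirectSum.IsInternal V.1 := fun V =>
    (DirectSum.isInternal_submodule_iff_iSupIndep_and_iSup_eq_top _).2 ⟨V.2.1, V.2.2.1⟩
  let Φ : (Σ V : T, ∀ i, Basis (Fin (c i)) F (V.1 i)) →
      Basis ((i : Fin k) × Fin (c i)) F M := fun p => (internal p.1).collectedBasis p.2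
  have hΦcoe : ∀ p, ⇑(Φ p) = fun a : (i : Fin k) × Fin (c i) => ((p.2 a.1 a.2 : M)) :=
    fun p => DirectSum.IsInternal.collectedBasis_coe _ _
  have hΦbij : Function.Bijective Φ := by
    constructor
    · rintro ⟨⟨V, hV⟩, bs⟩ ⟨⟨W, hW⟩, bt⟩ h
      have hcoe : (fun a : (i : Fin k) × Fin (c i) => ((bs a.1 a.2 : M))) =
          (fun a => ((bt a.1 a.2 : M))) := by rw [← hΦcoe ⟨⟨V, hV⟩, bs⟩, ← hΦcoe ⟨⟨W, hW⟩, bt⟩, h]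
      have hVW : V = W := by
        funext i
        rw [← span_block (V i) (bs i), ← span_block (W i) (bt i)]
        congr 1
        ext x
        constructor
        · rintro ⟨j, rfl⟩; exact ⟨j, (congrFun hcoe ⟨i, j⟩).symm⟩
        · rintro ⟨j, rfl⟩; exact ⟨j, congrFun hcoe ⟨i, j⟩⟩
      subst hVW
      have : bs = bt := by
        funext i
        refine Basis.eq_of_apply_eq fun j => ?_
        exact Subtype.val_injective (congrFun hcoe ⟨i, j⟩)
      rw [this]
    · intro b
      have li : ∀ i : Fin k, LinearIndependent F (fun j : Fin (c i) => b ⟨i, j⟩) :=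
        fun i => b.linearIndependent.comp (Sigma.mk i) sigma_mk_injective
      set V : Fin k → Submodule F M :=
        fun i => Submodule.span F (Set.range fun j : Fin (c i) => b ⟨i, j⟩) with hVdef
      have hindep : iSupIndep V := by
        intro i
        have h1 : V i ≤ Submodule.span F (b '' {a : (i' : Fin k) × Fin (c i') | a.1 = i}) := by
          refine Submodule.span_mono ?_
          rintro x ⟨j, rfl⟩; exact ⟨⟨i, j⟩, rfl, rfl⟩
        have h2 : (⨆ (j) (_ : j ≠ i), V j) ≤
            Submodule.span F (b '' {a : (i' : Fin k) × Fin (c i') | a.1 ≠ i}) := by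
          refine iSup₂_le fun j hj => ?_
          refine Submodule.span_le.2 ?_
          rintro x ⟨j', rfl⟩
          exact Submodule.subset_span ⟨⟨j, j'⟩, hj, rfl⟩
        exact ((b.linearIndependent.disjoint_span_image (by
          simp [Set.disjoint_left])).mono h1 h2)
      have hsup : (⨆ i, V i) = ⊤ := by
        rw [eq_top_iff, ← b.span_eq, Submodule.span_le]
        rintro x ⟨a, rfl⟩
        exact Submodule.mem_iSup_of_mem a.1 (Submodule.subset_span ⟨a.2, rfl⟩)
      have hrank : ∀ i, Module.finrank F (V i) = c i := fun i => by
        rw [hVdef, finrank_span_eq_card (li i), Fintype.card_fin]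
      refine ⟨⟨⟨V, hindep, hsup, hrank⟩, fun i => Basis.span (li i)⟩, ?_⟩
      refine Basis.eq_of_apply_eq fun a => ?_
      rw [hΦcoe]
      show ((Basis.span (li a.1) a.2 : M)) = b a
      rw [Basis.span_apply]
  have card1 : Nat.card (Σ V : T, ∀ i, Basis (Fin (c i)) F (V.1 i)) =
      Nat.card (Basis ((i : Fin k) × Fin (c i)) F M) := Nat.card_eq_of_bijective Φ hΦbij
  have card2 : Nat.card (Basis ((i : Fin k) × Fin (c i)) F M) = gma (Fintype.card F) n := by
    have hcard : Fintype.card ((i : Fin k) × Fin (c i)) = n := by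
      simp [Fintype.card_sigma, hc]
    rw [card_basis' _ (by rw [hcard, hn]), hcard]
  -- finiteness
  haveI : Finite (Submodule F M) :=
    Finite.of_injective (fun p : Submodule F M => (p : Set M)) SetLike.coe_injective
  haveI : ∀ (p : Submodule F M) (ι : Type) (_ : Fintype ι), Finite (Basis ι F p) := by
    intro p ι _
    exact Finite.of_injective (fun b : Basis ι F p => ⇑b) DFunLike.coe_injective
  haveI : ∀ V : T, ∀ i, Finite (Basis (Fin (c i)) F (V.1 i)) := fun V i => this _ _ inferInstance
  letI : Fintype T := Fintype.ofFinite T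
  letI : ∀ V : T, ∀ i, Fintype (Basis (Fin (c i)) F (V.1 i)) :=
    fun V i => Fintype.ofFinite _
  have card3 : Nat.card (Σ V : T, ∀ i, Basis (Fin (c i)) F (V.1 i)) =
      Nat.card T * ∏ i, gma (Fintype.card F) (c i) := by
    rw [Nat.card_eq_fintype_card, Fintype.card_sigma]
    have : ∀ V : T, Fintype.card (∀ i, Basis (Fin (c i)) F (V.1 i)) =
        ∏ i, gma (Fintype.card F) (c i) := by
      intro V
      rw [Fintype.card_pi]
      refine Finset.prod_congr rfl fun i _ => ?_
      rw [← Nat.card_eq_fintype_card, card_basis_fin _ (V.2.2.2 i)]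
    rw [Finset.sum_congr rfl fun V _ => this V, Finset.sum_const, Nat.card_eq_fintype_card,
      Finset.card_univ, smul_eq_mul]
  rw [← card3, card1, card2]

end aux2
section aux3

variable {F : Type} [Field F] [Fintype F]

lemma card_OD {M : Type} [AddCommGroup M] [Module F M] [Finite M]
    {n k : ℕ} (hn : Module.finrank F M = n) :
    (Nat.card {V : Fin k → Submodule F M //
        (∀ i, V i ≠ ⊥) ∧ iSupIndep V ∧ (⨆ i, V i) = ⊤} : ℚ) =
      ∑ c ∈ (Finset.Nat.antidiagonalTuple k n).filter (fun c => ∀ i, 0 < c i),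
        (gma (Fintype.card F) n : ℚ) / ∏ i, (gma (Fintype.card F) (c i) : ℚ) := by
  classical
  have hfin : Module.Finite F M := Module.Finite.of_finite
  haveI : Finite (Submodule F M) :=
    Finite.of_injective (fun p : Submodule F M => (p : Set M)) SetLike.coe_injective
  set s := (Finset.Nat.antidiagonalTuple k n).filter (fun c => ∀ i, 0 < c i) with hs
  set OD := {V : Fin k → Submodule F M //
      (∀ i, V i ≠ ⊥) ∧ iSupIndep V ∧ (⨆ i, V i) = ⊤} with hOD
  have hmem : ∀ V : OD, (fun i => Module.finrank F (V.1 i)) ∈ s := by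
    intro V
    rw [hs, Finset.mem_filter, Finset.Nat.mem_antidiagonalTuple]
    refine ⟨?_, fun i => ?_⟩
    · have hint : DirectSum.IsInternal V.1 :=
        (DirectSum.isInternal_submodule_iff_iSupIndep_and_iSup_eq_top _).2 ⟨V.2.2.1, V.2.2.2⟩
      have hb := Module.finrank_eq_card_basis
        (hint.collectedBasis (fun i => Module.finBasis F (V.1 i)))
      rw [hn, Fintype.card_sigma] at hb
      simp only [Fintype.card_fin] at hb
      simpa using hb.symm
    · have h0 : Module.finrank F (V.1 i) ≠ 0 := by
        rw [Ne, Submodule.finrank_eq_zero]; exact V.2.1 i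
      exact Nat.pos_of_ne_zero h0
  let f : OD → {c // c ∈ s} := fun V => ⟨fun i => Module.finrank F (V.1 i), hmem V⟩
  have fib : ∀ (c : Fin k → ℕ) (hc : c ∈ s),
      Nat.card {V : OD // f V = ⟨c, hc⟩} * ∏ i, gma (Fintype.card F) (c i) =
        gma (Fintype.card F) n := by
    intro c hc
    have hcs : ∑ i, c i = n :=
      Finset.Nat.mem_antidiagonalTuple.1 (Finset.mem_filter.1 hc).1
    have hpos : ∀ i, 0 < c i := (Finset.mem_filter.1 hc).2
    rw [← card_Dc hn c hcs]
    congr 1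
    refine Nat.card_congr ?_
    exact { toFun := fun V => ⟨V.1.1, V.1.2.2.1, V.1.2.2.2,
              fun i => congrFun (congrArg Subtype.val V.2) i⟩
            invFun := fun V => ⟨⟨V.1, fun i hbot => by
                have h1 : Module.finrank F (V.1 i) = c i := V.2.2.2 i
                rw [hbot, finrank_bot] at h1
                exact (hpos i).ne h1,
              V.2.1, V.2.2.1⟩, Subtype.ext (funext V.2.2.2)⟩
            left_inv := fun _ => rfl
            right_inv := fun _ => rfl }
  have fibQ : ∀ (c : Fin k → ℕ) (hc : c ∈ s),
      (Nat.card {V : OD // f V = ⟨c, hc⟩} : ℚ) =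
        (gma (Fintype.card F) n : ℚ) / ∏ i, (gma (Fintype.card F) (c i) : ℚ) := by
    intro c hc
    have h0 : (∏ i, (gma (Fintype.card F) (c i) : ℚ)) ≠ 0 := by
      refine Finset.prod_ne_zero_iff.2 fun i _ => ?_
      exact_mod_cast (gma_pos (F := F) (c i)).ne'
    rw [eq_div_iff h0]
    exact_mod_cast congrArg (Nat.cast : ℕ → ℚ) (fib c hc)
  letI : Fintype OD := Fintype.ofFinite _
  have hcard : (Nat.card OD : ℚ) = ∑ c : {c // c ∈ s},
      (Nat.card {V : OD // f V = c} : ℚ) := by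
    rw [Nat.card_congr (Equiv.sigmaFiberEquiv f).symm, Nat.card_eq_fintype_card,
      Fintype.card_sigma]
    push_cast
    exact Finset.sum_congr rfl fun c _ => by rw [Nat.card_eq_fintype_card]
  rw [hcard]
  rw [show (fun c : {c // c ∈ s} => (Nat.card {V : OD // f V = c} : ℚ)) =
      (fun c : {c // c ∈ s} => (gma (Fintype.card F) n : ℚ) /
        ∏ i, (gma (Fintype.card F) (c.1 i) : ℚ)) from funext fun c => fibQ c.1 c.2]
  exact Finset.sum_coe_sort s
    (fun c => (gma (Fintype.card F) n : ℚ) / ∏ i, (gma (Fintype.card F) (c i) : ℚ))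

omit [Fintype F] in
lemma card_unordered {M : Type} [AddCommGroup M] [Module F M] [Finite M] (k : ℕ) :
    Nat.card {V : Fin k → Submodule F M //
        (∀ i, V i ≠ ⊥) ∧ iSupIndep V ∧ (⨆ i, V i) = ⊤} =
      Nat.card {D : Finset (Submodule F M) // D.card = k ∧ (∀ V ∈ D, V ≠ ⊥) ∧
        sSupIndep (D : Set (Submodule F M)) ∧
        sSup (D : Set (Submodule F M)) = ⊤} * k.factorial := by
  classical
  haveI : Finite (Submodule F M) :=
    Finite.of_injective (fun p : Submodule F M => (p : Set M)) SetLike.coe_injective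
  set OD := {V : Fin k → Submodule F M //
      (∀ i, V i ≠ ⊥) ∧ iSupIndep V ∧ (⨆ i, V i) = ⊤} with hOD
  set U := {D : Finset (Submodule F M) // D.card = k ∧ (∀ V ∈ D, V ≠ ⊥) ∧
        sSupIndep (D : Set (Submodule F M)) ∧
        sSup (D : Set (Submodule F M)) = ⊤} with hU
  have hinj : ∀ V : OD, Function.Injective V.1 := fun V => V.2.2.1.injective V.2.1
  have hcoe : ∀ V : OD, ((Finset.image V.1 Finset.univ : Finset (Submodule F M)) :
      Set (Submodule F M)) = Set.range V.1 := by
    intro V; rw [Finset.coe_image, Finset.coe_univ, Set.image_univ]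
  let g : OD → U := fun V => ⟨Finset.image V.1 Finset.univ, by
    refine ⟨?_, ?_, ?_, ?_⟩
    · rw [Finset.card_image_of_injective _ (hinj V), Finset.card_univ, Fintype.card_fin]
    · intro W hW; obtain ⟨i, _, rfl⟩ := Finset.mem_image.1 hW; exact V.2.1 i
    · rw [hcoe V]; exact V.2.2.1.sSupIndep_range
    · rw [hcoe V, sSup_range]; exact V.2.2.2⟩
  have fib : ∀ D : U, Nat.card {V : OD // g V = D} = k.factorial := by
    intro D
    have e : {V : OD // g V = D} ≃ (Fin k ≃ {x // x ∈ D.1}) :=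
      { toFun := fun V => Equiv.ofBijective (fun i => (⟨V.1.1 i, by
          have him : Finset.image V.1.1 Finset.univ = D.1 := congrArg Subtype.val V.2
          rw [← him]; exact Finset.mem_image_of_mem _ (Finset.mem_univ i)⟩ :
            {x // x ∈ D.1}))
          (by
            rw [Fintype.bijective_iff_injective_and_card]
            refine ⟨fun a b hab => hinj V.1 (congrArg Subtype.val hab), ?_⟩
            rw [Fintype.card_coe, D.2.1, Fintype.card_fin])
        invFun := fun e => ⟨⟨fun i => (e i : Submodule F M), by
            refine ⟨fun i => D.2.2.1 _ (e i).2, ?_, ?_⟩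
            · have h0 : iSupIndep (fun x : {x // x ∈ D.1} => (x : Submodule F M)) :=
                (sSupIndep_iff (D.1 : Set (Submodule F M))).1 D.2.2.2.1
              exact h0.comp e.injective
            · rw [Equiv.iSup_comp (g := fun x : {x // x ∈ D.1} => (x : Submodule F M)) e]
              have h1 : sSup ((D.1 : Finset (Submodule F M)) : Set (Submodule F M)) =
                  ⨆ y : {x // x ∈ D.1}, (y : Submodule F M) := sSup_eq_iSup' _
              exact h1.symm.trans D.2.2.2.2⟩,
          by
            refine Subtype.ext ?_
            refine Finset.ext fun x => ?_
            simp only [g, Finset.mem_image, Finset.mem_univ, true_and]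
            constructor
            · rintro ⟨i, rfl⟩; exact (e i).2
            · intro hx; exact ⟨e.symm ⟨x, hx⟩, by simp⟩⟩
        left_inv := fun V => rfl
        right_inv := fun e => Equiv.ext fun i => Subtype.ext rfl }
    rw [Nat.card_congr e, Nat.card_eq_fintype_card,
      Fintype.card_equiv ((Fintype.equivFinOfCardEq
        (by rw [Fintype.card_coe, D.2.1] : Fintype.card {x // x ∈ D.1} = k)).symm),
      Fintype.card_fin]
  letI : Fintype (Submodule F M) := Fintype.ofFinite _
  letI : Fintype OD := Fintype.ofFinite _
  letI : Fintype U := Fintype.ofFinite _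
  rw [Nat.card_congr (Equiv.sigmaFiberEquiv g).symm, Nat.card_eq_fintype_card,
    Fintype.card_sigma]
  rw [Finset.sum_congr rfl fun D _ => by
    rw [← Nat.card_eq_fintype_card, fib D]]
  rw [Finset.sum_const, Finset.card_univ, smul_eq_mul, Nat.card_eq_fintype_card]

end aux3

/-- `{n brace k}_q = (1/k!) Σ γ_n / (γ_{n_1} ⋯ γ_{n_k})`, the sum over ordered
`k`-tuples of positive integers summing to `n`. -/
theorem qStirling_eq (q n k : ℕ) (hk : 1 ≤ k) (hn : k ≤ n)
    (F : Type) [Field F] [Fintype F] (hF : Fintype.card F = q) :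
    (qStirling n k F : ℚ) =
      (1 / k.factorial) *
        ∑ c ∈ (Finset.Nat.antidiagonalTuple k n).filter (fun c => ∀ i, 0 < c i),
          (gma q n : ℚ) / ∏ i, (gma q (c i) : ℚ) := by
  subst hF
  classical
  have hfr : Module.finrank F (Fin n → F) = n := by
    rw [Module.finrank_fintype_fun_eq_card, Fintype.card_fin]
  have key2 := card_OD (F := F) (M := Fin n → F) (k := k) hfr
  have key1 := card_unordered (F := F) (M := Fin n → F) k
  unfold qStirling
  have hkf : (k.factorial : ℚ) ≠ 0 := Nat.cast_ne_zero.2 k.factorial_ne_zero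
  rw [div_mul_eq_mul_div, one_mul, eq_div_iff hkf, ← key2]
  exact_mod_cast congrArg (Nat.cast (R := ℚ)) key1.symm
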